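/- For every pair (j₁,j₂) ∈ Θ₂ and every λ ∈ (0,1/8] such that ‖F(x₀)‖ ≥ 2λ, one has |μ(j₁,j₂,p₀,λ)| ≤ K λ |j₂|^{−1/2} ‖F(x₀)‖^{−1/2}, where K is a constant depending only on c₁ and c₂. -/

import Mathlib

open Set Real MeasureTheory

/-- Distance from a real number to the nearest integer. -/
noncomputable def nint (y : ℝ) : ℝ := |y - round y|

lemma mono_aux (g g' : ℝ → ℝ) (hg : ∀ x, HasDerivAt g (g' x) x)
    {a b : ℝ} (hab : a ≤ b) (h : ∀ x, a ≤ x → x ≤ b → 0 ≤ g' x) : g a ≤ g b := by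
  have hmono : MonotoneOn g (Icc a b) := by
    apply monotoneOn_of_deriv_nonneg (convex_Icc a b)
    · exact fun x _ => (hg x).continuousAt.continuousWithinAt
    · exact fun x _ => ((hg x).differentiableAt).differentiableWithinAt
    · intro x hx
      rw [interior_Icc] at hx
      rw [(hg x).deriv]
      exact h x hx.1.le hx.2.le
  exact hmono (left_mem_Icc.2 hab) (right_mem_Icc.2 hab) hab

lemma hlin (c x₀ : ℝ) (y : ℝ) : HasDerivAt (fun z => c * (z - x₀)) c y := by
  simpa using ((hasDerivAt_id y).sub_const x₀).const_mul c

lemma hquad (c x₀ : ℝ) (y : ℝ) :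
    HasDerivAt (fun z => c * (z - x₀) ^ 2 / 2) (c * (y - x₀)) y := by
  have h1 : HasDerivAt (fun z : ℝ => (z - x₀) ^ 2) (2 * (y - x₀)) y := by
    simpa using ((hasDerivAt_id y).sub_const x₀).fun_pow 2
  have := (h1.const_mul c).div_const 2
  rw [show c * (y - x₀) = c * (2 * (y - x₀)) / 2 by ring]
  exact this

lemma key_bound (F F' F'' : ℝ → ℝ)
    (hF : ∀ x, HasDerivAt F (F' x) x) (hF' : ∀ x, HasDerivAt F' (F'' x) x)
    (cl cu : ℝ) (hcl : 0 < cl) (hb : ∀ x, cl ≤ F'' x ∧ F'' x ≤ cu)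
    (x₀ : ℝ) (hx₀ : F' x₀ = 0) (q lam : ℝ) (hlam : 0 < lam)
    (hN : 2 * lam ≤ |F x₀ - q|) :
    volume {x : ℝ | |F x - q| < lam}
      ≤ ENNReal.ofReal (8 * lam / (cl * Real.sqrt (|F x₀ - q| / cu))) := by
  set N := |F x₀ - q| with hNdef
  have hcu : 0 < cu := lt_of_lt_of_le hcl ((hb x₀).1.trans (hb x₀).2)
  have hNpos : 0 < N := lt_of_lt_of_le (by linarith) hN
  set r := Real.sqrt (N / cu) with hrdef
  have hrpos : 0 < r := Real.sqrt_pos.2 (div_pos hNpos hcu)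
  set d := 2 * lam / (cl * r) with hddef
  have hdpos : 0 < d := div_pos (by linarith) (mul_pos hcl hrpos)
  -- first-derivative bounds
  have f1 : ∀ x, x₀ ≤ x → cl * (x - x₀) ≤ F' x := by
    intro x hx
    have h0 := mono_aux (fun y => F' y - cl * (y - x₀)) (fun y => F'' y - cl)
      (fun y => (hF' y).sub (hlin cl x₀ y)) hx
      (fun y _ _ => by linarith [(hb y).1])
    simp only [hx₀, sub_self, mul_zero, zero_sub] at h0
    linarith
  have f2 : ∀ x, x₀ ≤ x → F' x ≤ cu * (x - x₀) := by
    intro x hx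
    have h0 := mono_aux (fun y => cu * (y - x₀) - F' y) (fun y => cu - F'' y)
      (fun y => (hlin cu x₀ y).sub (hF' y)) hx
      (fun y _ _ => by linarith [(hb y).2])
    simp only [hx₀, sub_self, mul_zero, sub_zero, zero_sub] at h0
    linarith
  have f3 : ∀ x, x ≤ x₀ → F' x ≤ cl * (x - x₀) := by
    intro x hx
    have h0 := mono_aux (fun y => F' y - cl * (y - x₀)) (fun y => F'' y - cl)
      (fun y => (hF' y).sub (hlin cl x₀ y)) hx
      (fun y _ _ => by linarith [(hb y).1])
    simp only [hx₀, sub_self, mul_zero, zero_sub] at h0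
    linarith
  have f4 : ∀ x, x ≤ x₀ → cu * (x - x₀) ≤ F' x := by
    intro x hx
    have h0 := mono_aux (fun y => cu * (y - x₀) - F' y) (fun y => cu - F'' y)
      (fun y => (hlin cu x₀ y).sub (hF' y)) hx
      (fun y _ _ => by linarith [(hb y).2])
    simp only [hx₀, sub_self, mul_zero, sub_zero, zero_sub] at h0
    linarith
  -- second-order upper bound
  have f5 : ∀ x, F x - F x₀ ≤ cu * (x - x₀) ^ 2 / 2 := by
    intro x
    rcases le_total x₀ x with hx | hx
    · have h0 := mono_aux (fun y => cu * (y - x₀) ^ 2 / 2 - F y)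
        (fun y => cu * (y - x₀) - F' y)
        (fun y => (hquad cu x₀ y).sub (hF y)) hx
        (fun y hy _ => by linarith [f2 y hy])
      simp only [sub_self] at h0
      nlinarith
    · have h0 := mono_aux (fun y => F y - cu * (y - x₀) ^ 2 / 2)
        (fun y => F' y - cu * (y - x₀))
        (fun y => (hF y).sub (hquad cu x₀ y)) hx
        (fun y _ hy => by linarith [f4 y hy])
      simp only [sub_self] at h0
      nlinarith
  -- F has a minimum at x₀
  have f8 : ∀ x, F x₀ ≤ F x := by
    intro x
    rcases le_total x₀ x with hx | hx
    · have h0 := mono_aux F F' hF hx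
        (fun y hy _ => le_trans (by nlinarith) (f1 y hy))
      exact h0
    · have h0 := mono_aux (fun y => -F y) (fun y => -F' y)
        (fun y => (hF y).neg) hx
        (fun y _ hy => by nlinarith [f3 y hy])
      linarith
  -- points of S are at distance ≥ r from x₀
  have hfar : ∀ x, |F x - q| < lam → r ≤ |x - x₀| := by
    intro x hx
    have h1 : N ≤ |F x₀ - F x| + |F x - q| := by
      calc N = |F x₀ - q| := rfl
        _ ≤ |F x₀ - F x| + |F x - q| := abs_sub_le _ _ _
    have h2 : |F x₀ - F x| = F x - F x₀ := by
      rw [abs_sub_comm, abs_of_nonneg (by linarith [f8 x])]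
    have h3 : N / 2 ≤ F x - F x₀ := by linarith
    have h4 : N / cu ≤ (x - x₀) ^ 2 := by
      rw [div_le_iff₀ hcu]
      nlinarith [f5 x]
    calc r = Real.sqrt (N / cu) := rfl
      _ ≤ Real.sqrt ((x - x₀) ^ 2) := Real.sqrt_le_sqrt h4
      _ = |x - x₀| := Real.sqrt_sq_eq_abs _
  -- pairwise distance bound on each side
  have pair_plus : ∀ a b, |F a - q| < lam → |F b - q| < lam →
      x₀ ≤ a → x₀ ≤ b → a ≤ b → b - a ≤ d := by
    intro a b ha hb' hxa hxb hab
    have hra : r ≤ a - x₀ := by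
      have := hfar a ha
      rwa [abs_of_nonneg (by linarith)] at this
    have h0 := mono_aux (fun y => F y - (cl * r) * y) (fun y => F' y - cl * r)
      (fun y => (hF y).sub (by simpa using (hasDerivAt_id y).const_mul (cl * r))) hab
      (fun y hy _ => by
        have h1 := f1 y (by linarith)
        have h2 : cl * r ≤ cl * (y - x₀) :=
          mul_le_mul_of_nonneg_left (by linarith) hcl.le
        linarith)
    have h2 : F b - F a < 2 * lam := by
      have := abs_sub_abs_le_abs_sub (F b - q) (F a - q)
      have hab2 : |(F b - q) - (F a - q)| = |F b - F a| := by ring_nf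
      calc F b - F a ≤ |F b - F a| := le_abs_self _
        _ = |(F b - q) - (F a - q)| := by rw [show (F b - q) - (F a - q) = F b - F a by ring]
        _ ≤ |F b - q| + |F a - q| := abs_sub _ _
        _ < 2 * lam := by linarith
    have h3 : cl * r * (b - a) < 2 * lam := by nlinarith
    rw [hddef, le_div_iff₀ (mul_pos hcl hrpos)]
    nlinarith
  have pair_minus : ∀ a b, |F a - q| < lam → |F b - q| < lam →
      a ≤ x₀ → b ≤ x₀ → a ≤ b → b - a ≤ d := by
    intro a b ha hb' hxa hxb hab
    have hrb : r ≤ x₀ - b := by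
      have := hfar b hb'
      rwa [abs_of_nonpos (by linarith), neg_sub] at this
    have h0 := mono_aux (fun y => -F y - (cl * r) * y) (fun y => -F' y - cl * r)
      (fun y => ((hF y).neg).sub (by simpa using (hasDerivAt_id y).const_mul (cl * r))) hab
      (fun y _ hy => by
        have h1 := f3 y (by linarith)
        have h2 : cl * (y - x₀) ≤ cl * (-r) :=
          mul_le_mul_of_nonneg_left (by linarith) hcl.le
        nlinarith)
    have h2 : F a - F b < 2 * lam := by
      calc F a - F b ≤ |F a - F b| := le_abs_self _
        _ = |(F a - q) - (F b - q)| := by rw [show (F a - q) - (F b - q) = F a - F b by ring]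
        _ ≤ |F a - q| + |F b - q| := abs_sub _ _
        _ < 2 * lam := by linarith
    have h3 : cl * r * (b - a) < 2 * lam := by nlinarith
    rw [hddef, le_div_iff₀ (mul_pos hcl hrpos)]
    nlinarith
  -- measure bound
  set S := {x : ℝ | |F x - q| < lam} with hSdef
  have hside : ∀ (T : Set ℝ), T ⊆ S → (∀ a b, a ∈ T → b ∈ T → a ≤ b → b - a ≤ d) →
      volume T ≤ ENNReal.ofReal (2 * d) := by
    intro T hTS hpair
    rcases T.eq_empty_or_nonempty with he | ⟨a₀, ha₀⟩
    · simp [he]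
    · have hsub : T ⊆ Icc (a₀ - d) (a₀ + d) := by
        intro x hx
        constructor
        · rcases le_total x a₀ with h | h
          · have := hpair x a₀ hx ha₀ h; linarith
          · linarith
        · rcases le_total a₀ x with h | h
          · have := hpair a₀ x ha₀ hx h; linarith
          · linarith
      calc volume T ≤ volume (Icc (a₀ - d) (a₀ + d)) := measure_mono hsub
        _ = ENNReal.ofReal (a₀ + d - (a₀ - d)) := Real.volume_Icc
        _ = ENNReal.ofReal (2 * d) := by ring_nf
  have hsplit : S ⊆ (S ∩ Ici x₀) ∪ (S ∩ Iic x₀) := by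
    intro x hx
    rcases le_total x₀ x with h | h
    · exact Or.inl ⟨hx, h⟩
    · exact Or.inr ⟨hx, h⟩
  have hp : volume (S ∩ Ici x₀) ≤ ENNReal.ofReal (2 * d) :=
    hside _ inter_subset_left
      (fun a b ha hb hab => pair_plus a b ha.1 hb.1 ha.2 hb.2 hab)
  have hm : volume (S ∩ Iic x₀) ≤ ENNReal.ofReal (2 * d) :=
    hside _ inter_subset_left
      (fun a b ha hb hab => pair_minus a b ha.1 hb.1 ha.2 hb.2 hab)
  calc volume S ≤ volume ((S ∩ Ici x₀) ∪ (S ∩ Iic x₀)) := measure_mono hsplit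
    _ ≤ volume (S ∩ Ici x₀) + volume (S ∩ Iic x₀) := measure_union_le _ _
    _ ≤ ENNReal.ofReal (2 * d) + ENNReal.ofReal (2 * d) := add_le_add hp hm
    _ = ENNReal.ofReal (4 * d) := by
        rw [← ENNReal.ofReal_add (by positivity) (by positivity)]; ring_nf
    _ = ENNReal.ofReal (8 * lam / (cl * r)) := by rw [hddef]; ring_nf

lemma nint_eq (y : ℝ) (p : ℤ) (h1 : -(1/2) < y - p) (h2 : y - p ≤ 1/2) :
    nint y = |y - p| := by
  rcases lt_or_eq_of_le h2 with h2' | h2'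
  · have : round y = p := by
      rw [round_eq, Int.floor_eq_iff]
      refine ⟨by linarith, by push_cast; linarith⟩
    rw [nint, this]
  · have : round y = p + 1 := by
      rw [round_eq, Int.floor_eq_iff]
      refine ⟨by push_cast; linarith, by push_cast; linarith⟩
    rw [nint, this]
    push_cast
    rw [abs_of_nonpos (by linarith), abs_of_nonneg (by linarith)]
    linarith

lemma sign_const (g : ℝ → ℝ) (hg : Continuous g) (hne : ∀ x, g x ≠ 0) :
    (∀ x, 0 < g x) ∨ (∀ x, g x < 0) := by
  rcases lt_or_gt_of_ne (hne 0) with h0 | h0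
  · right; intro x
    rcases lt_or_gt_of_ne (hne x) with hx | hx
    · exact hx
    · exfalso
      have h00 : (0:ℝ) ∈ uIcc (g 0) (g x) := mem_uIcc.2 (Or.inl ⟨h0.le, hx.le⟩)
      obtain ⟨z, _, hz⟩ := intermediate_value_uIcc hg.continuousOn h00
      exact hne z hz
  · left; intro x
    rcases lt_or_gt_of_ne (hne x) with hx | hx
    · exfalso
      have h00 : (0:ℝ) ∈ uIcc (g 0) (g x) := mem_uIcc.2 (Or.inr ⟨hx.le, h0.le⟩)
      obtain ⟨z, _, hz⟩ := intermediate_value_uIcc hg.continuousOn h00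
      exact hne z hz
    · exact hx


theorem mu_p0_bound_large_norm
    (c₁ c₂ : ℝ) (hc₁ : 0 < c₁) (hc₁₂ : c₁ ≤ c₂) :
    ∃ K : ℝ, 0 < K ∧
      ∀ (ξ η : ℝ), ξ ≤ η →
      ∀ (f f' f'' : ℝ → ℝ),
        (∀ x, HasDerivAt f (f' x) x) →
        (∀ x, HasDerivAt f' (f'' x) x) →
        Continuous f'' →
        (∀ x, c₁ ≤ |f'' x| ∧ |f'' x| ≤ c₂) →
      ∀ Mmax : ℝ, IsGreatest ((fun x => |f' x|) '' Icc ξ η) Mmax →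
      ∀ j₁ j₂ : ℤ, j₂ ≠ 0 → |(j₁ : ℝ)| ≤ 2 * (1 + Mmax) * |(j₂ : ℝ)| →
      ∀ x₀ : ℝ, (j₁ : ℝ) + (j₂ : ℝ) * f' x₀ = 0 →
      ∀ p₀ : ℤ,
        -(1/2) < ((j₁ : ℝ) * x₀ + (j₂ : ℝ) * f x₀) - (p₀ : ℝ) →
        ((j₁ : ℝ) * x₀ + (j₂ : ℝ) * f x₀) - (p₀ : ℝ) ≤ 1/2 →
      ∀ lam : ℝ, 0 < lam → lam ≤ 1/8 →
        2 * lam ≤ nint ((j₁ : ℝ) * x₀ + (j₂ : ℝ) * f x₀) →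
        (volume {x ∈ Icc ξ η | |(j₁ : ℝ) * x + (j₂ : ℝ) * f x - (p₀ : ℝ)| < lam}).toReal
          ≤ K * lam * |(j₂ : ℝ)| ^ (-(1 : ℝ)/2) *
              (nint ((j₁ : ℝ) * x₀ + (j₂ : ℝ) * f x₀)) ^ (-(1 : ℝ)/2) := by

  have hc₂ : 0 < c₂ := lt_of_lt_of_le hc₁ hc₁₂
  have hsc₂ : 0 < Real.sqrt c₂ := Real.sqrt_pos.2 hc₂
  refine ⟨8 * Real.sqrt c₂ / c₁, div_pos (by positivity) hc₁, ?_⟩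
  intro ξ η hξη f f' f'' hf hf' hf''c hbf Mmax hM j₁ j₂ hj₂ hj₁ x₀ hx₀ p₀ hp₁ hp₂
    lam hlam hlam8 hnint
  have hJ : 0 < |(j₂:ℝ)| := abs_pos.2 (Int.cast_ne_zero.2 hj₂)
  have hnn : nint ((j₁:ℝ) * x₀ + (j₂:ℝ) * f x₀)
      = |(j₁:ℝ) * x₀ + (j₂:ℝ) * f x₀ - (p₀:ℝ)| := nint_eq _ p₀ hp₁ hp₂
  rw [hnn] at hnint
  set N := |(j₁:ℝ) * x₀ + (j₂:ℝ) * f x₀ - (p₀:ℝ)| with hNdef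
  have hNpos : 0 < N := lt_of_lt_of_le (by linarith) hnint
  -- derivatives
  have hFd : ∀ x, HasDerivAt (fun x => (j₁:ℝ) * x + (j₂:ℝ) * f x)
      ((j₁:ℝ) + (j₂:ℝ) * f' x) x := by
    intro x
    have h1 : HasDerivAt (fun x : ℝ => (j₁:ℝ) * x) (j₁:ℝ) x := by
      simpa using (hasDerivAt_id x).const_mul (j₁:ℝ)
    exact h1.add ((hf x).const_mul (j₂:ℝ))
  have hF'd : ∀ x, HasDerivAt (fun x => (j₁:ℝ) + (j₂:ℝ) * f' x)
      ((j₂:ℝ) * f'' x) x := fun x => ((hf' x).const_mul (j₂:ℝ)).const_add (j₁:ℝ)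
  -- sign of j₂ * f''
  have hne : ∀ x, (j₂:ℝ) * f'' x ≠ 0 := by
    intro x
    refine mul_ne_zero (Int.cast_ne_zero.2 hj₂) (fun h => ?_)
    have := (hbf x).1
    rw [h, abs_zero] at this
    linarith
  have habs : ∀ x, c₁ * |(j₂:ℝ)| ≤ |(j₂:ℝ) * f'' x| ∧
      |(j₂:ℝ) * f'' x| ≤ c₂ * |(j₂:ℝ)| := by
    intro x
    rw [abs_mul]
    constructor
    · nlinarith [(hbf x).1, hJ]
    · nlinarith [(hbf x).2, hJ]
  have hcont : Continuous (fun x => (j₂:ℝ) * f'' x) := continuous_const.mul hf''c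
  -- the measure bound on the full sublevel set
  have hvol : volume {x : ℝ | |(j₁:ℝ) * x + (j₂:ℝ) * f x - (p₀:ℝ)| < lam}
      ≤ ENNReal.ofReal (8 * lam / (c₁ * |(j₂:ℝ)| * Real.sqrt (N / (c₂ * |(j₂:ℝ)|)))) := by
    rcases sign_const _ hcont hne with hpos | hneg
    · have hbF : ∀ x, c₁ * |(j₂:ℝ)| ≤ (j₂:ℝ) * f'' x ∧
          (j₂:ℝ) * f'' x ≤ c₂ * |(j₂:ℝ)| := by
        intro x
        have h := habs x
        rw [abs_of_pos (hpos x)] at h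
        exact h
      have := key_bound (fun x => (j₁:ℝ) * x + (j₂:ℝ) * f x)
        (fun x => (j₁:ℝ) + (j₂:ℝ) * f' x) (fun x => (j₂:ℝ) * f'' x)
        hFd hF'd (c₁ * |(j₂:ℝ)|) (c₂ * |(j₂:ℝ)|) (mul_pos hc₁ hJ) hbF
        x₀ hx₀ (p₀:ℝ) lam hlam (by simpa [← hNdef] using hnint)
      simpa [← hNdef] using this
    · have hbF : ∀ x, c₁ * |(j₂:ℝ)| ≤ -((j₂:ℝ) * f'' x) ∧
          -((j₂:ℝ) * f'' x) ≤ c₂ * |(j₂:ℝ)| := by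
        intro x
        have h := habs x
        rw [abs_of_neg (hneg x)] at h
        exact h
      have hFd' : ∀ x, HasDerivAt (fun x => -((j₁:ℝ) * x + (j₂:ℝ) * f x))
          (-((j₁:ℝ) + (j₂:ℝ) * f' x)) x := fun x => (hFd x).neg
      have hF'd' : ∀ x, HasDerivAt (fun x => -((j₁:ℝ) + (j₂:ℝ) * f' x))
          (-((j₂:ℝ) * f'' x)) x := fun x => (hF'd x).neg
      have hx₀' : -((j₁:ℝ) + (j₂:ℝ) * f' x₀) = 0 := by rw [hx₀, neg_zero]
      have hNneg : |-((j₁:ℝ) * x₀ + (j₂:ℝ) * f x₀) - -(p₀:ℝ)| = N := by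
        rw [hNdef, show -((j₁:ℝ) * x₀ + (j₂:ℝ) * f x₀) - -(p₀:ℝ)
          = -(((j₁:ℝ) * x₀ + (j₂:ℝ) * f x₀) - (p₀:ℝ)) by ring, abs_neg]
      have := key_bound (fun x => -((j₁:ℝ) * x + (j₂:ℝ) * f x))
        (fun x => -((j₁:ℝ) + (j₂:ℝ) * f' x)) (fun x => -((j₂:ℝ) * f'' x))
        hFd' hF'd' (c₁ * |(j₂:ℝ)|) (c₂ * |(j₂:ℝ)|) (mul_pos hc₁ hJ) hbF
        x₀ hx₀' (-(p₀:ℝ)) lam hlam (by rw [hNneg]; exact hnint)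
      rw [hNneg] at this
      have hseteq : {x : ℝ | |-((j₁:ℝ) * x + (j₂:ℝ) * f x) - -(p₀:ℝ)| < lam}
          = {x : ℝ | |(j₁:ℝ) * x + (j₂:ℝ) * f x - (p₀:ℝ)| < lam} := by
        ext x
        simp only [mem_setOf_eq]
        rw [show -((j₁:ℝ) * x + (j₂:ℝ) * f x) - -(p₀:ℝ)
          = -(((j₁:ℝ) * x + (j₂:ℝ) * f x) - (p₀:ℝ)) by ring, abs_neg]
      rw [hseteq] at this
      exact this
  -- arithmetic identity for the bound
  have hsJ : 0 < Real.sqrt |(j₂:ℝ)| := Real.sqrt_pos.2 hJ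
  have hsN : 0 < Real.sqrt N := Real.sqrt_pos.2 hNpos
  have harith : 8 * lam / (c₁ * |(j₂:ℝ)| * Real.sqrt (N / (c₂ * |(j₂:ℝ)|)))
      = 8 * Real.sqrt c₂ / c₁ * lam * |(j₂:ℝ)| ^ (-(1:ℝ)/2) * N ^ (-(1:ℝ)/2) := by
    have e1 : |(j₂:ℝ)| ^ (-(1:ℝ)/2) = (Real.sqrt |(j₂:ℝ)|)⁻¹ := by
      rw [neg_div, Real.rpow_neg (abs_nonneg _), ← Real.sqrt_eq_rpow]
    have e2 : N ^ (-(1:ℝ)/2) = (Real.sqrt N)⁻¹ := by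
      rw [neg_div, Real.rpow_neg (abs_nonneg _), ← Real.sqrt_eq_rpow]
    rw [Real.sqrt_div hNpos.le, Real.sqrt_mul hc₂.le, e1, e2]
    obtain ⟨s, hs0, hs1, hs2⟩ : ∃ s : ℝ, 0 < s ∧ Real.sqrt |(j₂:ℝ)| = s ∧
        |(j₂:ℝ)| = s * s := ⟨Real.sqrt |(j₂:ℝ)|, hsJ, rfl,
          (Real.mul_self_sqrt (abs_nonneg _)).symm⟩
    rw [hs1, hs2]
    field_simp
  -- conclude
  rw [hnn]
  apply ENNReal.toReal_le_of_le_ofReal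
  · have hK : (0:ℝ) ≤ 8 * Real.sqrt c₂ / c₁ := le_of_lt (div_pos (by positivity) hc₁)
    exact mul_nonneg (mul_nonneg (mul_nonneg hK hlam.le)
      (Real.rpow_nonneg (abs_nonneg _) _)) (Real.rpow_nonneg (abs_nonneg _) _)
  · calc volume {x ∈ Icc ξ η | |(j₁:ℝ) * x + (j₂:ℝ) * f x - (p₀:ℝ)| < lam}
        ≤ volume {x : ℝ | |(j₁:ℝ) * x + (j₂:ℝ) * f x - (p₀:ℝ)| < lam} :=
          measure_mono (fun x hx => hx.2)
      _ ≤ ENNReal.ofReal (8 * lam / (c₁ * |(j₂:ℝ)| * Real.sqrt (N / (c₂ * |(j₂:ℝ)|)))) := hvol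
      _ = ENNReal.ofReal (8 * Real.sqrt c₂ / c₁ * lam * |(j₂:ℝ)| ^ (-(1:ℝ)/2)
            * N ^ (-(1:ℝ)/2)) := by rw [harith]
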